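/- For any two integrable functions f, g : [0,1] → [a,b], if a hash point (x,y) is chosen uniformly at random from [0,1] × [a,b] and the hash h_{(x,y)}(f) equals 1 if f(x) > y, -1 if f(x) < y, and 0 if f(x) = y, then the probability that h_{(x,y)}(f) = h_{(x,y)}(g) equals 1 - L₁(f,g)/(b-a), where L₁(f,g) = ∫₀¹ |f(x) - g(x)| dx. -/

import Mathlib

open MeasureTheory

/-- Point hash: 1 if the function is strictly above the point, -1 if strictly below, 0 on it. -/
noncomputable def pointHash (φ : ℝ → ℝ) (p : ℝ × ℝ) : ℤ :=
  if φ p.1 > p.2 then 1 else if φ p.1 < p.2 then -1 else 0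

lemma pointHash_measurable {φ : ℝ → ℝ} (hφ : Measurable φ) :
    Measurable (pointHash φ) := by
  unfold pointHash
  refine Measurable.ite (measurableSet_lt measurable_snd (hφ.comp measurable_fst)) measurable_const
    (Measurable.ite (measurableSet_lt (hφ.comp measurable_fst) measurable_snd) measurable_const
      measurable_const)

lemma graph_null {φ : ℝ → ℝ} (hφ : Measurable φ) :
    volume {p : ℝ × ℝ | p.2 = φ p.1} = 0 := by
  rw [MeasureTheory.Measure.volume_eq_prod, Measure.prod_apply (measurableSet_graph hφ)]
  have : ∀ x : ℝ, (Prod.mk x ⁻¹' {p : ℝ × ℝ | p.2 = φ p.1}) = {φ x} := by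
    intro x; ext y; simp [Set.mem_preimage]
  simp only [this]
  simp

/-- The collision probability of the `L₁` hash of two functions `f, g : [0,1] → [a,b]`
under a uniform point of `[0,1] × [a,b]` equals `1 - L₁(f,g)/(b-a)`. -/
theorem stmt0 (a b : ℝ) (hab : a < b) (f g : ℝ → ℝ)
    (hfmeas : Measurable f) (hgmeas : Measurable g)
    (hf : IntegrableOn f (Set.Icc 0 1)) (hg : IntegrableOn g (Set.Icc 0 1))
    (hfr : ∀ x ∈ Set.Icc (0:ℝ) 1, f x ∈ Set.Icc a b)
    (hgr : ∀ x ∈ Set.Icc (0:ℝ) 1, g x ∈ Set.Icc a b) :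
    (volume {p : ℝ × ℝ | p ∈ Set.Icc (0:ℝ) 1 ×ˢ Set.Icc a b ∧
        pointHash f p = pointHash g p}).toReal / (b - a)
      = 1 - (∫ x in Set.Icc (0:ℝ) 1, |f x - g x|) / (b - a) := by
  set I : Set ℝ := Set.Icc 0 1 with hI
  set R : Set (ℝ × ℝ) := I ×ˢ Set.Icc a b with hR
  set S : Set (ℝ × ℝ) := {p : ℝ × ℝ | p ∈ R ∧ pointHash f p = pointHash g p} with hS
  set mn : ℝ → ℝ := fun x => min (f x) (g x) with hmn
  set mx : ℝ → ℝ := fun x => max (f x) (g x) with hmx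
  set D : Set (ℝ × ℝ) := regionBetween mn mx I with hD
  have hmnm : Measurable mn := hfmeas.min hgmeas
  have hmxm : Measurable mx := hfmeas.max hgmeas
  have hSm : MeasurableSet S := by
    refine MeasurableSet.inter (measurableSet_Icc.prod measurableSet_Icc) ?_
    exact measurableSet_eq_fun (pointHash_measurable hfmeas)
      (pointHash_measurable hgmeas)
  have hDm : MeasurableSet D := measurableSet_regionBetween hmnm hmxm measurableSet_Icc
  -- disjointness
  have hdisj : Disjoint S D := by
    rw [Set.disjoint_left]
    rintro p ⟨_, hps⟩ ⟨hpI, hy1, hy2⟩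
    rcases le_total (f p.1) (g p.1) with hle | hle
    · have h1 : f p.1 < p.2 := lt_of_le_of_lt (le_min le_rfl hle) hy1
      have h2 : p.2 < g p.1 := lt_of_lt_of_le hy2 (max_le hle le_rfl)
      simp only [pointHash, if_neg (not_lt.mpr h1.le), if_pos h1,
        if_pos h2] at hps
      omega
    · have h1 : g p.1 < p.2 := lt_of_le_of_lt (le_min hle le_rfl) hy1
      have h2 : p.2 < f p.1 := lt_of_lt_of_le hy2 (max_le le_rfl hle)
      simp only [pointHash, if_neg (not_lt.mpr h1.le), if_pos h1,
        if_pos h2] at hps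
      omega
  -- D ⊆ R
  have hDR : D ⊆ R := by
    rintro p ⟨hpI, hy1, hy2⟩
    refine ⟨hpI, ?_, ?_⟩
    · exact le_of_lt (lt_of_le_of_lt (le_min (hfr _ hpI).1 (hgr _ hpI).1) hy1)
    · exact le_of_lt (lt_of_lt_of_le hy2 (max_le (hfr _ hpI).2 (hgr _ hpI).2))
  have hSR : S ⊆ R := fun p hp => hp.1
  -- R covered up to graphs
  have hcover : R ⊆ S ∪ D ∪ ({p : ℝ × ℝ | p.2 = f p.1} ∪ {p : ℝ × ℝ | p.2 = g p.1}) := by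
    intro p hp
    by_cases hDp : p ∈ D
    · exact Or.inl (Or.inr hDp)
    by_cases hfp : p.2 = f p.1
    · exact Or.inr (Or.inl hfp)
    by_cases hgp : p.2 = g p.1
    · exact Or.inr (Or.inr hgp)
    refine Or.inl (Or.inl ⟨hp, ?_⟩)
    have hpI : p.1 ∈ I := hp.1
    have hnot : ¬ (mn p.1 < p.2 ∧ p.2 < mx p.1) := fun h => hDp ⟨hpI, h.1, h.2⟩
    rcases lt_or_gt_of_ne hfp with h1 | h1
    · -- p.2 < f p.1
      have h2 : p.2 < g p.1 := by
        rcases lt_or_gt_of_ne hgp with h2 | h2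
        · exact h2
        · exact absurd ⟨lt_of_le_of_lt (min_le_right _ _) h2,
            lt_of_lt_of_le h1 (le_max_left _ _)⟩ hnot
      simp [pointHash, h1, h2]
    · -- f p.1 < p.2
      have h2 : g p.1 < p.2 := by
        rcases lt_or_gt_of_ne hgp with h2 | h2
        · exact absurd ⟨lt_of_le_of_lt (min_le_left _ _) h1,
            lt_of_lt_of_le h2 (le_max_right _ _)⟩ hnot
        · exact h2
      simp [pointHash, not_lt.mpr h1.le, h1, not_lt.mpr h2.le, h2]
  -- volumes
  have hRvol : volume R = ENNReal.ofReal (b - a) := by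
    rw [hR, MeasureTheory.Measure.volume_eq_prod, Measure.prod_prod, hI, Real.volume_Icc,
      Real.volume_Icc]
    simp
  have hDvol : volume D = ENNReal.ofReal (∫ x in I, |f x - g x|) := by
    have hmni : IntegrableOn mn I := hf.inf hg
    have hmxi : IntegrableOn mx I := hf.sup hg
    rw [hD, MeasureTheory.Measure.volume_eq_prod,
      volume_regionBetween_eq_integral hmni hmxi measurableSet_Icc
        (fun x _ => min_le_max)]
    congr 1
    apply setIntegral_congr_fun measurableSet_Icc
    intro x _
    simp [hmx, hmn, max_sub_min_eq_abs, abs_sub_comm]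
  set L : ℝ := ∫ x in I, |f x - g x| with hL
  have hL0 : 0 ≤ L := setIntegral_nonneg measurableSet_Icc fun x _ => abs_nonneg _
  have hLle : L ≤ b - a := by
    have : L ≤ ∫ _x in I, (b - a) := by
      apply setIntegral_mono_on ((hf.sub hg).abs) (integrableOn_const (by
        rw [hI, Real.volume_Icc]; simp)) measurableSet_Icc
      intro x hx
      have h1 := hfr x hx; have h2 := hgr x hx
      simp only [Set.mem_Icc] at h1 h2
      rw [abs_le]
      constructor <;> simp only [Pi.sub_apply] <;> linarith [h1.1, h1.2, h2.1, h2.2]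
    rwa [setIntegral_const, hI, Real.volume_real_Icc, sub_zero, max_eq_left zero_le_one,
      one_smul] at this
  -- volume R = volume S + volume D
  have hunion : volume R = volume S + volume D := by
    have h1 : volume R ≤ volume (S ∪ D) := by
      refine le_trans (measure_mono hcover) ?_
      refine le_trans (measure_union_le _ _) ?_
      have hz : volume ({p : ℝ × ℝ | p.2 = f p.1} ∪ {p : ℝ × ℝ | p.2 = g p.1}) = 0 :=
        by apply measure_union_null (graph_null hfmeas) (graph_null hgmeas)
      rw [hz, add_zero]
    have h2 : volume (S ∪ D) ≤ volume R := measure_mono (Set.union_subset hSR hDR)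
    rw [← le_antisymm h2 h1, measure_union hdisj hDm]
  have hSfin : volume S ≠ ⊤ := by
    intro h
    have hmono : volume S ≤ volume R := measure_mono hSR
    rw [h, hRvol, top_le_iff] at hmono
    exact ENNReal.ofReal_ne_top hmono
  have hkey : (volume S).toReal + L = b - a := by
    have := hunion
    rw [hRvol, hDvol] at this
    have h2 := congrArg ENNReal.toReal this.symm
    rwa [ENNReal.toReal_add hSfin ENNReal.ofReal_ne_top, ENNReal.toReal_ofReal hL0,
      ENNReal.toReal_ofReal (by linarith)] at h2
  have hba : b - a ≠ 0 := by linarith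
  have hSval : (volume S).toReal = (b - a) - L := by linarith
  show (volume S).toReal / (b - a) = 1 - L / (b - a)
  rw [hSval]
  field_simp
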